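/- Let A be an (ℓ+1)×(ℓ+1) integer matrix whose Dynkin diagram is a path with all arrows pointing left, in the sense that for each i = 1,…,ℓ the (i-1)-th column of A has its i-th entry equal to -1 and its j-th entry equal to 0 for all j > i, with diagonal entries 2. Suppose d = (d_0,…,d_ℓ) is a vector of positive integers with d·A = 0 (i.e. d spans the left kernel) and d_0 ≠ 0. Then every ψ ∈ ℤ^{ℓ+1} with d_0ψ_0 + d_1ψ_1 + ⋯ + d_ℓψ_ℓ = 0 lies in the ℤ-span of the columns of A. -/

import Mathlib

/-- Back substitution: solve rows `1..ℓ` from the bottom up, with `x ℓ = 0`. -/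
def bsub (ℓ : ℕ) (A : Matrix (Fin (ℓ + 1)) (Fin (ℓ + 1)) ℤ) (ψ : Fin (ℓ + 1) → ℤ)
    (i : Fin (ℓ + 1)) : ℤ :=
  if h : (i : ℕ) = ℓ then 0 else
    (∑ c ∈ (Finset.Ioi i).attach,
        A ⟨(i : ℕ) + 1, by omega⟩ c.1 * bsub ℓ A ψ c.1) - ψ ⟨(i : ℕ) + 1, by omega⟩
termination_by ℓ - (i : ℕ)
decreasing_by
  have hc : i < c.1 := Finset.mem_Ioi.mp c.2
  have hc' : (i : ℕ) < (c.1 : ℕ) := hc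
  have := c.1.isLt
  omega

lemma bsub_eq (ℓ : ℕ) (A : Matrix (Fin (ℓ + 1)) (Fin (ℓ + 1)) ℤ) (ψ : Fin (ℓ + 1) → ℤ)
    (i : Fin (ℓ + 1)) (h : (i : ℕ) ≠ ℓ) (j : Fin (ℓ + 1)) (hj : (j : ℕ) = (i : ℕ) + 1) :
    bsub ℓ A ψ i = (∑ c ∈ Finset.Ioi i, A j c * bsub ℓ A ψ c) - ψ j := by
  have hj' : j = ⟨(i : ℕ) + 1, by have := i.isLt; omega⟩ := Fin.ext hj
  rw [hj']
  rw [bsub, dif_neg h, ← Finset.sum_attach (Finset.Ioi i) (fun c => A _ c * bsub ℓ A ψ c)]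

/-- Stmt 10: If the Dynkin diagram is a path with all arrows pointing left (column `i-1`
has a `-1` in row `i` and zeros below), `d` is a positive left-kernel vector with `d_0 ≠ 0`,
then every ψ with `∑ d_i ψ_i = 0` lies in the ℤ-column-span of `A`. -/
theorem stmt10 (ℓ : ℕ) (A : Matrix (Fin (ℓ + 1)) (Fin (ℓ + 1)) ℤ)
    (hdiag : ∀ i, A i i = 2)
    (hcol : ∀ i : Fin ℓ, A i.succ i.castSucc = -1 ∧
      ∀ j : Fin (ℓ + 1), i.succ < j → A j i.castSucc = 0)
    (d : Fin (ℓ + 1) → ℤ) (hdpos : ∀ i, 0 < d i)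
    (hker : Matrix.vecMul d A = 0) (hd0 : d 0 ≠ 0)
    (ψ : Fin (ℓ + 1) → ℤ) (hψ : ∑ i, d i * ψ i = 0) :
    ∃ x : Fin (ℓ + 1) → ℤ, A.mulVec x = ψ := by
  let x : Fin (ℓ + 1) → ℤ := bsub ℓ A ψ
  -- rows 1..ℓ are satisfied
  have h1 : ∀ j : Fin (ℓ + 1), (j : ℕ) ≠ 0 → A.mulVec x j = ψ j := by
    intro j hj
    have hjl : (j : ℕ) - 1 < ℓ := by have := j.isLt; omega
    set iF : Fin (ℓ + 1) := ⟨(j : ℕ) - 1, by omega⟩ with hiF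
    have hSiF : x iF = (∑ c ∈ Finset.Ioi iF, A j c * x c) - ψ j :=
      bsub_eq ℓ A ψ iF (by simp [hiF]; omega) j (by simp [hiF]; omega)
    have hsplit : A.mulVec x j =
        (∑ c ∈ Finset.Iic iF, A j c * x c) + ∑ c ∈ Finset.Ioi iF, A j c * x c := by
      rw [Matrix.mulVec, dotProduct]
      rw [← Finset.sum_add_sum_compl (Finset.Iic iF)]
      congr 1
      apply Finset.sum_congr
      · ext c; simp [not_le]
      · intros; rfl
    have hIic : ∑ c ∈ Finset.Iic iF, A j c * x c = - x iF := by
      rw [Finset.sum_eq_single_of_mem iF (Finset.mem_Iic.mpr le_rfl)]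
      · have hm := (hcol ⟨(j : ℕ) - 1, hjl⟩).1
        have hcs : (⟨(j : ℕ) - 1, hjl⟩ : Fin ℓ).castSucc = iF := by
          apply Fin.ext; simp [hiF]
        have hss : (⟨(j : ℕ) - 1, hjl⟩ : Fin ℓ).succ = j := by
          apply Fin.ext; simp; omega
        rw [hcs, hss] at hm
        rw [hm]; ring
      · intro c hc hne
        have hlt : (c : ℕ) < (iF : ℕ) := by
          have h1 := Fin.le_def.mp (Finset.mem_Iic.mp hc)
          have h2 : (c : ℕ) ≠ (iF : ℕ) := fun h => hne (Fin.ext h)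
          omega
        have hcl : (c : ℕ) < ℓ := by have := iF.isLt; omega
        have hz := (hcol ⟨(c : ℕ), hcl⟩).2 j (by
          rw [Fin.lt_def]; simp [hiF] at hlt ⊢; omega)
        have hcs : (⟨(c : ℕ), hcl⟩ : Fin ℓ).castSucc = c := by
          apply Fin.ext; simp
        rw [hcs] at hz
        rw [hz]; ring
    rw [hsplit, hIic, hSiF]; ring
  -- whole weighted sum is zero
  have hall : ∑ i, d i * A.mulVec x i = 0 := by
    have hsw : ∑ i, d i * A.mulVec x i = ∑ c, (∑ i, d i * A i c) * x c := by
      simp only [Matrix.mulVec, dotProduct, Finset.mul_sum]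
      rw [Finset.sum_comm]
      apply Finset.sum_congr rfl; intro c _
      rw [Finset.sum_mul]
      apply Finset.sum_congr rfl; intro i _; ring
    rw [hsw]
    apply Finset.sum_eq_zero
    intro c _
    have hk := congrFun hker c
    rw [Matrix.vecMul, dotProduct] at hk
    simp only [Pi.zero_apply] at hk
    rw [hk, zero_mul]
  have h0 : A.mulVec x 0 = ψ 0 := by
    have e1 : ∑ i, d i * A.mulVec x i
        = d 0 * A.mulVec x 0 + ∑ i : Fin ℓ, d i.succ * ψ i.succ := by
      rw [Fin.sum_univ_succ]
      congr 1
      apply Finset.sum_congr rfl; intro i _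
      rw [h1 i.succ (by simp [Fin.val_succ])]
    have e2 : ∑ i, d i * ψ i = d 0 * ψ 0 + ∑ i : Fin ℓ, d i.succ * ψ i.succ := by
      rw [Fin.sum_univ_succ]
    rw [hall] at e1
    rw [hψ] at e2
    have hcan : d 0 * A.mulVec x 0 = d 0 * ψ 0 := by omega
    exact mul_left_cancel₀ hd0 hcan
  refine ⟨x, funext fun j => ?_⟩
  by_cases hj : (j : ℕ) = 0
  · have hj0 : j = 0 := Fin.ext (by simpa using hj)
    rw [hj0]; exact h0
  · exact h1 j hj
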